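/- If C is a d×d real skew-symmetric invertible matrix and M is a d×d real symmetric positive semi-definite matrix, then det(C^{−1} + M) > 0. -/

import Mathlib

open Matrix

/-- If `C` is skew-symmetric and invertible and `M` is symmetric PSD, then
`det(C⁻¹ + M) > 0`. -/
theorem det_skew_inv_add_psd_pos (d : ℕ)
    (C M : Matrix (Fin d) (Fin d) ℝ)
    (hC : Cᵀ = -C) (hCinv : IsUnit C.det) (hM : M.PosSemidef) :
    0 < (C⁻¹ + M).det := by
  set A : Matrix (Fin d) (Fin d) ℝ := C⁻¹ + M with hA
  -- skewness of C⁻¹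
  have hCinvT : (C⁻¹)ᵀ = -(C⁻¹) := by
    rw [Matrix.transpose_nonsing_inv, hC]
    refine Matrix.inv_eq_right_inv ?_
    rw [Matrix.neg_mul, Matrix.mul_neg, neg_neg, Matrix.mul_nonsing_inv C hCinv]
  -- the quadratic form of C⁻¹ vanishes
  have hskew : ∀ v : Fin d → ℝ, v ⬝ᵥ (C⁻¹ *ᵥ v) = 0 := by
    intro v
    have h1 : v ⬝ᵥ (C⁻¹ *ᵥ v) = ((C⁻¹)ᵀ *ᵥ v) ⬝ᵥ v := by
      rw [Matrix.dotProduct_mulVec, Matrix.mulVec_transpose]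
    rw [hCinvT] at h1
    have h2 : ((-(C⁻¹)) *ᵥ v) ⬝ᵥ v = -(v ⬝ᵥ (C⁻¹ *ᵥ v)) := by
      rw [Matrix.neg_mulVec, neg_dotProduct, dotProduct_comm]
    linarith [h1, h2]
  -- nonvanishing of det (t • 1 + A) for t ≥ 0
  have hne : ∀ t : ℝ, 0 ≤ t → ((t • (1 : Matrix (Fin d) (Fin d) ℝ) + A)).det ≠ 0 := by
    intro t ht hdet
    obtain ⟨v, hv, hv0⟩ := (Matrix.exists_mulVec_eq_zero_iff).mpr hdet
    have hq : v ⬝ᵥ ((t • (1 : Matrix (Fin d) (Fin d) ℝ) + A) *ᵥ v) = 0 := by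
      rw [hv0, dotProduct_zero]
    have hexp : v ⬝ᵥ ((t • (1 : Matrix (Fin d) (Fin d) ℝ) + A) *ᵥ v)
        = t * (v ⬝ᵥ v) + v ⬝ᵥ (M *ᵥ v) := by
      rw [Matrix.add_mulVec, dotProduct_add, hA, Matrix.add_mulVec,
        dotProduct_add, hskew v, Matrix.smul_mulVec, Matrix.one_mulVec,
        dotProduct_smul, smul_eq_mul]
      ring
    have hMv : 0 ≤ v ⬝ᵥ (M *ᵥ v) := by simpa using hM.dotProduct_mulVec_nonneg v
    have hvv : 0 ≤ v ⬝ᵥ v := Finset.sum_nonneg fun i _ => mul_self_nonneg (v i)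
    have hq' : t * (v ⬝ᵥ v) + v ⬝ᵥ (M *ᵥ v) = 0 := by rw [← hexp, hq]
    have hM0 : v ⬝ᵥ (M *ᵥ v) = 0 := by nlinarith
    have ht0 : t * (v ⬝ᵥ v) = 0 := by linarith
    -- M *ᵥ v = 0
    have hMv0 : M *ᵥ v = 0 := by
      have := (hM.dotProduct_mulVec_zero_iff v).mp (by simpa using hM0)
      exact this
    rcases eq_or_lt_of_le ht with rfl | htpos
    · -- t = 0 : then C⁻¹ *ᵥ v = 0, so v = 0
      have h1 : (C⁻¹ + M) *ᵥ v = 0 := by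
        simpa [hA] using hv0
      have h2 : C⁻¹ *ᵥ v = 0 := by
        rw [Matrix.add_mulVec, hMv0, add_zero] at h1
        exact h1
      have h3 : v = 0 := by
        have := congrArg (fun w => C *ᵥ w) h2
        simpa [Matrix.mulVec_mulVec, Matrix.mul_nonsing_inv C hCinv] using this
      exact hv h3
    · -- t > 0 : then v ⬝ᵥ v = 0, so v = 0
      have hvv0 : v ⬝ᵥ v = 0 := by
        rcases mul_eq_zero.mp ht0 with h | h
        · exact absurd h (ne_of_gt htpos)
        · exact h
      exact hv (dotProduct_self_eq_zero.mp hvv0)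
  -- continuity of t ↦ det (t•1 + A)
  have hcont : Continuous fun t : ℝ => ((t • (1 : Matrix (Fin d) (Fin d) ℝ) + A)).det := by
    apply Continuous.matrix_det
    exact (continuous_id.smul continuous_const).add continuous_const
  -- positivity for some s > 0
  have hcont2 : Continuous fun u : ℝ => ((1 : Matrix (Fin d) (Fin d) ℝ) + u • A).det := by
    apply Continuous.matrix_det
    exact continuous_const.add (continuous_id.smul continuous_const)
  have h1 : ((1 : Matrix (Fin d) (Fin d) ℝ) + (0:ℝ) • A).det = 1 := by simp
  have hev : ∀ᶠ u in nhds (0:ℝ), 0 < ((1 : Matrix (Fin d) (Fin d) ℝ) + u • A).det := by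
    refine (hcont2.continuousAt (x := 0)).eventually ?_
    show ∀ᶠ y in nhds (((1 : Matrix (Fin d) (Fin d) ℝ) + (0:ℝ) • A).det), 0 < y
    rw [h1]
    exact eventually_gt_nhds one_pos
  obtain ⟨u, hu, hupos⟩ : ∃ u : ℝ, 0 < ((1 : Matrix (Fin d) (Fin d) ℝ) + u • A).det ∧ 0 < u := by
    obtain ⟨u, hu1, hu2⟩ := ((hev.filter_mono nhdsWithin_le_nhds).and
      (self_mem_nhdsWithin : Set.Ioi (0:ℝ) ∈ nhdsWithin 0 (Set.Ioi 0))).exists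
    exact ⟨u, hu1, hu2⟩
  set s : ℝ := u⁻¹ with hs
  have hspos : 0 < s := inv_pos.mpr hupos
  have hfs : 0 < ((s • (1 : Matrix (Fin d) (Fin d) ℝ) + A)).det := by
    have hfact : s • (1 : Matrix (Fin d) (Fin d) ℝ) + A
        = s • ((1 : Matrix (Fin d) (Fin d) ℝ) + u • A) := by
      rw [smul_add, smul_smul, hs, inv_mul_cancel₀ (ne_of_gt hupos), one_smul]
    rw [hfact, Matrix.det_smul]
    positivity
  -- IVT: det is nonzero on [0, s] and positive at s, hence positive at 0
  by_contra hle
  push_neg at hle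
  have hz : ((0:ℝ) • (1 : Matrix (Fin d) (Fin d) ℝ) + A).det = A.det := by simp
  have hAne : A.det ≠ 0 := by
    have := hne 0 le_rfl
    rwa [hz] at this
  have hf0 : A.det < 0 := lt_of_le_of_ne hle hAne
  have hsub : Set.Icc (((0:ℝ) • (1 : Matrix (Fin d) (Fin d) ℝ) + A).det)
      ((s • (1 : Matrix (Fin d) (Fin d) ℝ) + A).det)
      ⊆ (fun t : ℝ => ((t • (1 : Matrix (Fin d) (Fin d) ℝ) + A)).det) '' Set.Icc 0 s :=
    intermediate_value_Icc (le_of_lt hspos) hcont.continuousOn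
  obtain ⟨c, hc, hc0⟩ := hsub ⟨by rw [hz]; exact le_of_lt hf0, le_of_lt hfs⟩
  exact hne c hc.1 hc0
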